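/- Let α > 0 and let p be a real polynomial. If c < d are two consecutive elements of Z(p) ∪ {0}, where Z(p) is the set of real zeros of p, then Υ_α p(x) = p(x) + (x/α)p'(x) has some zero in the open interval (c,d). -/
import Mathlib


open Polynomial Finset

/-- For `α > 0`, if `c < d` are two consecutive elements of `Z(p) ∪ {0}` (where `Z(p)`
is the set of real zeros of `p`), then `Υ_α p = p + (x/α) p'` has a zero in `(c, d)`. -/
theorem stmt_13 (α : ℝ) (hα : 0 < α) (p : Polynomial ℝ) (c d : ℝ) (hcd : c < d)
    (hc : p.IsRoot c ∨ c = 0) (hd : p.IsRoot d ∨ d = 0)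
    (hconsec : ∀ t : ℝ, c < t → t < d → ¬ p.IsRoot t ∧ t ≠ 0) :
    ∃ t : ℝ, c < t ∧ t < d ∧
      (p + Polynomial.C (1 / α) * (Polynomial.X * Polynomial.derivative p)).IsRoot t := by
  have hα' : α ≠ 0 := ne_of_gt hα
  suffices h : ∃ t, c < t ∧ t < d ∧
      α * p.eval t + t * (derivative p).eval t = 0 by
    obtain ⟨t, h1, h2, h3⟩ := h
    refine ⟨t, h1, h2, ?_⟩
    simp only [IsRoot, eval_add, eval_mul, eval_C, eval_X]
    field_simp
    linarith
  have h0 : 0 ≤ c ∨ d ≤ 0 := by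
    by_contra h
    push_neg at h
    exact (hconsec 0 h.1 h.2).2 rfl
  rcases h0 with h0 | h0
  · -- case 0 ≤ c : use f x = x^α * p(x)
    set f : ℝ → ℝ := fun x => x ^ α * p.eval x with hf
    have hfc : f c = 0 := by
      rcases hc with hc | hc
      · simp [hf, hc.eq_zero]
      · simp [hf, hc, Real.zero_rpow hα']
    have hfd : f d = 0 := by
      rcases hd with hd | hd
      · simp [hf, hd.eq_zero]
      · exfalso; linarith
    have hcont : ContinuousOn f (Set.Icc c d) := by
      apply Continuous.continuousOn
      exact (continuous_iff_continuousAt.mpr fun x =>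
        Real.continuousAt_rpow_const x α (Or.inr hα.le)).mul p.continuous
    have hderiv : ∀ x ∈ Set.Ioo c d, HasDerivAt f
        (α * x ^ (α - 1) * p.eval x + x ^ α * (derivative p).eval x) x := by
      intro x hx
      have hx0 : 0 < x := lt_of_le_of_lt h0 hx.1
      exact (Real.hasDerivAt_rpow_const (Or.inl hx0.ne')).mul (p.hasDerivAt x)
    obtain ⟨t, ht, ht0⟩ := exists_hasDerivAt_eq_zero hcd hcont (hfc.trans hfd.symm) hderiv
    have htpos : 0 < t := lt_of_le_of_lt h0 ht.1
    refine ⟨t, ht.1, ht.2, ?_⟩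
    have hpow : t ^ α = t ^ (α - 1) * t := by
      rw [show α = (α - 1) + 1 by ring, Real.rpow_add_one htpos.ne']
      ring_nf
    rw [hpow] at ht0
    have hpos : 0 < t ^ (α - 1) := Real.rpow_pos_of_pos htpos _
    have h2 : t ^ (α - 1) * (α * p.eval t + t * (derivative p).eval t) = 0 := by
      linear_combination ht0
    rcases mul_eq_zero.mp h2 with h3 | h3
    · exact absurd h3 hpos.ne'
    · exact h3
  · -- case d ≤ 0 : use f x = (-x)^α * p(x)
    set f : ℝ → ℝ := fun x => (-x) ^ α * p.eval x with hf
    have hfc : f c = 0 := by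
      rcases hc with hc | hc
      · simp [hf, hc.eq_zero]
      · exfalso; linarith
    have hfd : f d = 0 := by
      rcases hd with hd | hd
      · simp [hf, hd.eq_zero]
      · simp [hf, hd, Real.zero_rpow hα']
    have hcont : ContinuousOn f (Set.Icc c d) := by
      apply Continuous.continuousOn
      refine Continuous.mul ?_ p.continuous
      exact (continuous_iff_continuousAt.mpr fun x =>
        Real.continuousAt_rpow_const x α (Or.inr hα.le)).comp continuous_neg
    have hderiv : ∀ x ∈ Set.Ioo c d, HasDerivAt f
        ((α * (-x) ^ (α - 1) * (-1)) * p.eval x + (-x) ^ α * (derivative p).eval x) x := by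
      intro x hx
      have hx0 : x < 0 := lt_of_lt_of_le hx.2 h0
      have hneg : 0 < -x := by linarith
      have h1 : HasDerivAt (fun y : ℝ => (-y) ^ α) (α * (-x) ^ (α - 1) * (-1)) x := by
        exact (Real.hasDerivAt_rpow_const (p := α) (Or.inl hneg.ne')).comp x (hasDerivAt_neg x)
      exact h1.mul (p.hasDerivAt x)
    obtain ⟨t, ht, ht0⟩ := exists_hasDerivAt_eq_zero hcd hcont (hfc.trans hfd.symm) hderiv
    have htneg : 0 < -t := by
      have : t < 0 := lt_of_lt_of_le ht.2 h0
      linarith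
    refine ⟨t, ht.1, ht.2, ?_⟩
    have hpow : (-t) ^ α = (-t) ^ (α - 1) * (-t) := by
      rw [show α = (α - 1) + 1 by ring, Real.rpow_add_one htneg.ne']
      ring_nf
    rw [hpow] at ht0
    have hpos : 0 < (-t) ^ (α - 1) := Real.rpow_pos_of_pos htneg _
    have h2 : (-t) ^ (α - 1) * (-(α * p.eval t + t * (derivative p).eval t)) = 0 := by
      linear_combination ht0
    rcases mul_eq_zero.mp h2 with h3 | h3
    · exact absurd h3 hpos.ne'
    · linarith
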